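/- For every real M > 0 and every integer N ≥ 2, the quantity γ_c = (2(M+1)/π)·arcsin(1/(M+1)) − (2√(M(M+2)))/(π(N−1)(M+1)) satisfies 0 < γ_c < 1; moreover, for fixed N ≥ 2, the infimum of γ_c over M > 0 is (2/π)·(N−2)/(N−1) and the supremum is 1. -/

import Mathlib

open Real Set

set_option maxHeartbeats 1000000

-- auxiliary lemmas
private lemma aux_arcsin_le (s : ℝ) (h0 : 0 ≤ s) (h1 : s ≤ 1) :
    Real.arcsin s ≤ π / 2 * s := by
  have hπ : (0:ℝ) < π := Real.pi_pos
  have hx0 : 0 ≤ π / 2 * s := by positivity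
  have hx1 : π / 2 * s ≤ π / 2 := by nlinarith
  have h2 : 2 / π * (π / 2 * s) ≤ Real.sin (π / 2 * s) := Real.mul_le_sin hx0 hx1
  have h3 : s ≤ Real.sin (π / 2 * s) := by
    have : 2 / π * (π / 2 * s) = s := by field_simp
    linarith [this ▸ h2]
  calc Real.arcsin s ≤ Real.arcsin (Real.sin (π / 2 * s)) := Real.monotone_arcsin h3
    _ = π / 2 * s := Real.arcsin_sin (by linarith) hx1

private lemma aux_lt_arcsin (t : ℝ) (h0 : 0 < t) (h1 : t ≤ 1) : t < Real.arcsin t := by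
  have hp : 0 < Real.arcsin t := Real.arcsin_pos.2 h0
  have := Real.sin_lt hp
  rwa [Real.sin_arcsin (by linarith) h1] at this

private lemma aux_arcsin_le_div (t : ℝ) (h0 : 0 < t) (h1 : t < 1) :
    Real.arcsin t ≤ t / Real.sqrt (1 - t ^ 2) := by
  have hp : 0 < Real.arcsin t := Real.arcsin_pos.2 h0
  have hlt : Real.arcsin t < π / 2 := Real.arcsin_lt_pi_div_two.2 h1
  have := Real.lt_tan hp hlt
  rw [Real.tan_eq_sin_div_cos, Real.sin_arcsin (by linarith) h1.le, Real.cos_arcsin] at this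
  exact this.le

private lemma aux_arcsin_ge (t : ℝ) (h0 : 0 ≤ t) (h1 : t ≤ 1) :
    π / 2 * (1 - Real.sqrt (1 - t ^ 2)) ≤ Real.arcsin t := by
  have hs0 : 0 ≤ Real.sqrt (1 - t ^ 2) := Real.sqrt_nonneg _
  have hs1 : Real.sqrt (1 - t ^ 2) ≤ 1 :=
    (Real.sqrt_le_sqrt (by nlinarith : 1 - t ^ 2 ≤ 1)).trans_eq Real.sqrt_one
  have h2 : Real.arccos t ≤ π / 2 * Real.sqrt (1 - t ^ 2) := by
    rw [Real.arccos_eq_arcsin h0]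
    exact aux_arcsin_le _ hs0 hs1
  have h3 : Real.arccos t = π / 2 - Real.arcsin t := Real.arccos_eq_pi_div_two_sub_arcsin t
  linarith

theorem gamma_c_bounds (N : ℕ) (hN : 2 ≤ N) (γc : ℝ → ℝ)
    (hγc : ∀ M : ℝ, γc M =
        2 * (M + 1) / π * Real.arcsin (1 / (M + 1)) -
          2 * Real.sqrt (M * (M + 2)) / (π * ((N : ℝ) - 1) * (M + 1))) :
    (∀ M : ℝ, 0 < M → 0 < γc M ∧ γc M < 1) ∧
    sInf (γc '' Set.Ioi (0 : ℝ)) = 2 / π * (((N : ℝ) - 2) / ((N : ℝ) - 1)) ∧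
    sSup (γc '' Set.Ioi (0 : ℝ)) = 1 := by
  have hπ : (0:ℝ) < π := Real.pi_pos
  have hπ3 : (2:ℝ) < π := by linarith [Real.pi_gt_three]
  have hn : (2:ℝ) ≤ (N:ℝ) := by exact_mod_cast hN
  set n : ℝ := (N:ℝ) with hn_def
  have hn1 : (1:ℝ) ≤ n - 1 := by linarith
  set a : ℝ := 2 / π * ((n - 2) / (n - 1)) with ha_def
  -- rewrite γc in a convenient form
  have key : ∀ M : ℝ, 0 < M →
      γc M = 2 / π * (Real.arcsin (1 / (M + 1)) * (M + 1)) -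
        2 * Real.sqrt (1 - (1 / (M + 1)) ^ 2) / (π * (n - 1)) := by
    intro M hM
    have h1 : (0:ℝ) < M + 1 := by linarith
    have hs : Real.sqrt (M * (M + 2)) = (M + 1) * Real.sqrt (1 - (1 / (M + 1)) ^ 2) := by
      rw [← Real.sqrt_sq h1.le, ← Real.sqrt_mul (by positivity)]
      congr 1
      field_simp
      linear_combination -(Real.sq_sqrt (sq_nonneg (M + 1)))
    rw [hγc, hs]
    have hne : π * (n - 1) * (M + 1) ≠ 0 := by positivity
    field_simp
  -- main pointwise bounds
  have main : ∀ M : ℝ, 0 < M →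
      a < γc M ∧ γc M < 1 ∧
      (1 / (M + 1) ≤ 1 / 2 → γc M ≤ a + 3 * (1 / (M + 1)) ^ 2) ∧
      1 - 2 * Real.sqrt (1 - (1 / (M + 1)) ^ 2) ≤ γc M := by
    intro M hM
    have hM1 : (1:ℝ) < M + 1 := by linarith
    set t : ℝ := 1 / (M + 1) with ht_def
    have ht0 : 0 < t := by positivity
    have ht1 : t < 1 := by rw [ht_def]; rw [div_lt_one (by linarith)]; linarith
    have htM : t * (M + 1) = 1 := by rw [ht_def]; field_simp
    set S : ℝ := Real.sqrt (1 - t ^ 2) with hS_def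
    have hS0 : 0 ≤ S := Real.sqrt_nonneg _
    have hSpos : 0 < S := Real.sqrt_pos.2 (by nlinarith)
    have hS1 : S ≤ 1 :=
      (Real.sqrt_le_sqrt (by nlinarith : 1 - t ^ 2 ≤ 1)).trans_eq Real.sqrt_one
    have hS_ge : 1 - t ^ 2 ≤ S := by
      rw [hS_def]
      nlinarith [Real.sq_sqrt (show (0:ℝ) ≤ 1 - t ^ 2 by nlinarith),
        Real.sqrt_nonneg (1 - t ^ 2)]
    set A : ℝ := Real.arcsin t * (M + 1) with hA_def
    have hA1 : 1 < A := by
      have := aux_lt_arcsin t ht0 ht1.le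
      calc (1:ℝ) = t * (M + 1) := htM.symm
        _ < Real.arcsin t * (M + 1) := by nlinarith
    have hA2 : A ≤ π / 2 := by
      have := aux_arcsin_le t ht0.le ht1.le
      calc A ≤ (π / 2 * t) * (M + 1) := by nlinarith
        _ = π / 2 := by rw [mul_assoc, htM, mul_one]
    have hγ : γc M = 2 / π * A - 2 * S / (π * (n - 1)) := key M hM
    have hdiff : γc M - a = 2 / π * (A - 1) + 2 / (π * (n - 1)) * (1 - S) := by
      rw [hγ, ha_def]
      field_simp
      ring
    have hdiff2 : 1 - γc M = 2 / π * (π / 2 - A) + 2 / (π * (n - 1)) * S := by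
      rw [hγ]
      field_simp
      ring
    have hpos1 : (0:ℝ) < 2 / π := by positivity
    have hpos2 : (0:ℝ) < 2 / (π * (n - 1)) := by positivity
    refine ⟨?_, ?_, ?_, ?_⟩
    · nlinarith
    · nlinarith
    · intro ht2
      -- upper estimate for A
      have hSb : 3 / 4 ≤ S := by nlinarith
      have hA3 : A ≤ 1 / S := by
        have h := aux_arcsin_le_div t ht0 ht1
        have : Real.arcsin t * (M + 1) ≤ (t / S) * (M + 1) := by nlinarith
        calc A ≤ (t / S) * (M + 1) := this
          _ = (t * (M + 1)) / S := by ring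
          _ = 1 / S := by rw [htM]
      have hA4 : A ≤ 1 + 2 * t ^ 2 := by
        have h1S : 1 / S ≤ 1 + 2 * t ^ 2 := by
          rw [div_le_iff₀ hSpos]
          nlinarith
        linarith
      have h1mS : 1 - S ≤ t ^ 2 := by nlinarith
      have h2π : 2 / π ≤ 1 := by rw [div_le_one hπ]; linarith
      have hb1 : 2 / π * (A - 1) ≤ 2 * t ^ 2 := by
        calc 2 / π * (A - 1) ≤ 1 * (A - 1) :=
              mul_le_mul_of_nonneg_right h2π (by linarith)
          _ ≤ 2 * t ^ 2 := by linarith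
      have hb2 : 2 / (π * (n - 1)) * (1 - S) ≤ t ^ 2 := by
        have : 2 / (π * (n - 1)) ≤ 1 := by
          rw [div_le_one (by positivity)]
          nlinarith
        nlinarith [mul_nonneg hpos2.le (by nlinarith : (0:ℝ) ≤ 1 - S)]
      linarith
    · have hge := aux_arcsin_ge t ht0.le ht1.le
      have hA5 : π / 2 * (1 - S) ≤ A := by
        have h0 : 0 ≤ Real.arcsin t := Real.arcsin_nonneg.2 ht0.le
        calc π / 2 * (1 - S) ≤ Real.arcsin t := hge
          _ ≤ Real.arcsin t * (M + 1) := by nlinarith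
      have hb1 : 2 / π * (π / 2 - A) ≤ S := by
        have h1 : π / 2 - A ≤ π / 2 * S := by nlinarith
        have : 2 / π * (π / 2 - A) ≤ 2 / π * (π / 2 * S) := by nlinarith
        have heq : 2 / π * (π / 2 * S) = S := by field_simp
        linarith
      have hb2 : 2 / (π * (n - 1)) * S ≤ S := by
        have : 2 / (π * (n - 1)) ≤ 1 := by
          rw [div_le_one (by positivity)]
          nlinarith
        nlinarith
      linarith
  have ha_nonneg : 0 ≤ a := by
    rw [ha_def]
    exact mul_nonneg (by positivity) (div_nonneg (by linarith) (by linarith))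
  have hne : (γc '' Set.Ioi (0:ℝ)).Nonempty := ⟨γc 1, ⟨1, by norm_num, rfl⟩⟩
  have hbdd_below : BddBelow (γc '' Set.Ioi (0:ℝ)) := by
    refine ⟨a, ?_⟩
    rintro x ⟨M, hM, rfl⟩
    exact (main M hM).1.le
  have hbdd_above : BddAbove (γc '' Set.Ioi (0:ℝ)) := by
    refine ⟨1, ?_⟩
    rintro x ⟨M, hM, rfl⟩
    exact (main M hM).2.1.le
  refine ⟨fun M hM => ⟨lt_of_le_of_lt ha_nonneg (main M hM).1, (main M hM).2.1⟩, ?_, ?_⟩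
  · apply le_antisymm
    · apply le_of_forall_pos_le_add
      intro ε hε
      obtain ⟨M, hM1, hMε⟩ : ∃ M : ℝ, 1 ≤ M ∧ 3 / ε ≤ M :=
        ⟨max 1 (3 / ε), le_max_left _ _, le_max_right _ _⟩
      have hM0 : 0 < M := lt_of_lt_of_le one_pos hM1
      have ht2 : 1 / (M + 1) ≤ 1 / 2 := by
        apply div_le_div_of_nonneg_left (by norm_num) (by norm_num) (by linarith)
      have hkey := (main M hM0).2.2.1 ht2
      have hsmall : 3 * (1 / (M + 1)) ^ 2 ≤ ε := by
        have hM2 : 3 / ε ≤ M + 1 := by linarith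
        have h3 : 3 ≤ ε * (M + 1) := by
          rw [div_le_iff₀ hε] at hM2
          linarith
        have hM1' : (1:ℝ) ≤ M + 1 := by linarith
        rw [div_pow, one_pow, mul_one_div,
          div_le_iff₀ (by positivity : (0:ℝ) < (M + 1) ^ 2)]
        nlinarith
      calc sInf (γc '' Set.Ioi (0:ℝ)) ≤ γc M := csInf_le hbdd_below ⟨M, hM0, rfl⟩
        _ ≤ a + 3 * (1 / (M + 1)) ^ 2 := hkey
        _ ≤ a + ε := by linarith
    · apply le_csInf hne
      rintro x ⟨M, hM, rfl⟩
      exact (main M hM).1.le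
  · apply le_antisymm
    · apply csSup_le hne
      rintro x ⟨M, hM, rfl⟩
      exact (main M hM).2.1.le
    · apply le_of_forall_pos_le_add
      intro ε hε
      obtain ⟨M, hM0, hM1, hMε⟩ : ∃ M : ℝ, 0 < M ∧ M ≤ 1 ∧ M ≤ ε ^ 2 / 12 :=
        ⟨min 1 (ε ^ 2 / 12), lt_min one_pos (by positivity), min_le_left _ _,
          min_le_right _ _⟩
      have hkey := (main M hM0).2.2.2
      have hS : Real.sqrt (1 - (1 / (M + 1)) ^ 2) ≤ ε / 2 := by
        have h1 : 1 - (1 / (M + 1)) ^ 2 ≤ (ε / 2) ^ 2 := by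
          have hM1' : (0:ℝ) < M + 1 := by linarith
          have h2 : 1 - (1 / (M + 1)) ^ 2 ≤ 3 * M := by
            have h4 : 1 - 3 * M ≤ 1 / (M + 1) ^ 2 := by
              rw [le_div_iff₀ (by positivity : (0:ℝ) < (M + 1) ^ 2)]
              nlinarith [mul_pos hM0 hM0, mul_pos (mul_pos hM0 hM0) hM0]
            rw [div_pow, one_pow]
            linarith
          nlinarith
        calc Real.sqrt (1 - (1 / (M + 1)) ^ 2) ≤ Real.sqrt ((ε / 2) ^ 2) :=
              Real.sqrt_le_sqrt h1
          _ = ε / 2 := Real.sqrt_sq (by positivity)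
      have : 1 - ε ≤ γc M := by linarith
      calc (1:ℝ) ≤ γc M + ε := by linarith
        _ ≤ sSup (γc '' Set.Ioi (0:ℝ)) + ε := by
            have := le_csSup hbdd_above (⟨M, hM0, rfl⟩ : γc M ∈ γc '' Set.Ioi (0:ℝ))
            linarith
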